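/- If P, Q ⊆ X and there exist s, t ∈ S¹ with P = Q·s and Q = P·t, then there exist m, m' ∈ S¹ such that m restricted to P is a bijection from P onto Q, m' restricted to Q is a bijection from Q onto P, p·m·m' = p for all p ∈ P, and q·m'·m = q for all q ∈ Q. -/

import Mathlib

namespace Holonomy

variable {X : Type*}

/-- The extended image set `I = {X·s : s ∈ S} ∪ {X} ∪ {{x} : x ∈ X}`,
with the state set taken to be `Set.univ`. -/
def extImgs (S : Set (X → X)) : Set (Set X) :=
  {P : Set X | ∃ s ∈ S, P = s '' (Set.univ : Set X)} ∪ {(Set.univ : Set X)} ∪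
    {P : Set X | ∃ x : X, P = {x}}

/-- `C` is a maximal chain (w.r.t. inclusion) inside the family `I`. -/
def IsMaxChainIn (I : Set (Set X)) (C : Set (Set X)) : Prop :=
  C ⊆ I ∧ IsChain (· ⊆ ·) C ∧
    ∀ D : Set (Set X), D ⊆ I → IsChain (· ⊆ ·) D → C ⊆ D → D = C

/-- `𝒞`, the maximal chains in the extended image set. -/
def MaxChain (S : Set (X → X)) : Type _ :=
  {C : Set (Set X) // IsMaxChainIn (extImgs S) C}

/-- The action of `s` on a chain, `C·s = {P·s : P ∈ C}`. -/
def chainAct (C : Set (Set X)) (s : X → X) : Set (Set X) :=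
  (fun P => s '' P) '' C

/-- Chains `C` and `D` agree down to `P`. -/
def AgreeDownTo (C D : Set (Set X)) (P : Set X) : Prop :=
  P ∈ C ∧ P ∈ D ∧ ∀ Q : Set X, P ⊆ Q → (Q ∈ C ↔ Q ∈ D)

/-- `sh : 𝒞 → 𝒞` is a lift of `s`: `C·s ⊆ sh C` for every maximal chain `C`. -/
def IsLift (S : Set (X → X)) (s : X → X) (sh : MaxChain S → MaxChain S) : Prop :=
  ∀ C : MaxChain S, chainAct C.val s ⊆ (sh C).val

/-- `sh` is consistent with chain structure. -/
def Consistent (S : Set (X → X)) (s : X → X) (sh : MaxChain S → MaxChain S) : Prop :=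
  ∀ (C C' : MaxChain S) (P : Set X),
    AgreeDownTo C.val C'.val P → AgreeDownTo (sh C).val (sh C').val (s '' P)

/-- Product of a list of transformations, in left-to-right (right-action) order:
`prodList [a₁,…,a_k] = a₁⋯a_k`, i.e. `x ↦ a_k (⋯ (a₁ x))`. -/
def prodList {α : Type*} (l : List (α → α)) : α → α :=
  fun x => l.foldl (fun y f => f y) x

/-- Subduction: `P ⊆_S Q` iff `P ⊆ Q·s` for some `s ∈ S¹ = S ∪ {id}`. -/
def Subduction (S : Set (X → X)) (P Q : Set X) : Prop :=
  ∃ s ∈ insert (id : X → X) S, P ⊆ s '' Q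

/-- `P ≡_S Q`. -/
def SubEquiv (S : Set (X → X)) (P Q : Set X) : Prop :=
  Subduction S P Q ∧ Subduction S Q P

/-- Strict subduction `P ⊂_S Q`. -/
def SSubduction (S : Set (X → X)) (P Q : Set X) : Prop :=
  Subduction S P Q ∧ ¬ Subduction S Q P

/-- `P` is not a singleton. -/
def nonSingleton (P : Set X) : Prop := ¬ ∃ x : X, P = {x}

/-- The height of `Q`: the largest length of a strict subduction chain of
non-singleton members of `I` ending at `Q` (`0` for singletons, since then no
such chain exists). -/
noncomputable def height (S : Set (X → X)) (Q : Set X) : ℕ :=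
  sSup {n : ℕ | ∃ l : List (Set X), l.length = n ∧
    (∀ R ∈ l, R ∈ extImgs S ∧ nonSingleton R) ∧
    l.Chain' (SSubduction S) ∧ l.getLast? = some Q}

/-- Depth: `d(Q) = h(X) - h(Q) + 1`. -/
noncomputable def depth (S : Set (X → X)) (Q : Set X) : ℕ :=
  height S (Set.univ : Set X) - height S Q + 1

/-- The tiles of `P`: maximal elements (w.r.t. inclusion) of `{Q ∈ I : Q ⊊ P}`. -/
def tiles (S : Set (X → X)) (P : Set X) : Set (Set X) :=
  {Q | (Q ∈ extImgs S ∧ Q ⊂ P) ∧ ∀ R : Set X, R ∈ extImgs S → R ⊂ P → Q ⊆ R → Q = R}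

/-- The permutator group `G_P` of `P`, as a set of permutations of `P`. -/
def permutator (S : Set (X → X)) (P : Set X) : Set (Equiv.Perm ↥P) :=
  {σ | ∃ s ∈ S, s '' P = P ∧ ∀ p : ↥P, (σ p : X) = s (p : X)}

/-- The holonomy group `H_P` of `P`, as a set of permutations of `tiles P`. -/
def holonomyGroup (S : Set (X → X)) (P : Set X) : Set (Equiv.Perm ↥(tiles S P)) :=
  {σ | ∃ s ∈ S, s '' P = P ∧ ∀ T : ↥(tiles S P), ((σ T : Set X) : Set X) = s '' ((T : Set X) : Set X)}



/-- The state of approximation at level `i` of the positioned chain of a maximal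
chain `C`: `α_1 = X`, and for `i > 1`, `α_i` is the entry of the positioned chain
at the largest filled position `j < i`.  Since position `d(P)` of the positioned
chain of `C : X = P₁ ⊋ ⋯ ⊋ P_k` holds the successor of `P` for each non-minimal
member `P`, `α_i` is the smallest member of `C` whose immediate predecessor in
`C` has depth `< i`. -/
noncomputable def alpha (S : Set (X → X)) (C : Set (Set X)) (i : ℕ) : Set X :=
  if i ≤ 1 then Set.univ
  else ⋂₀ {Q | Q ∈ C ∧ ∀ P : Set X,
    (P ∈ C ∧ Q ⊂ P ∧ ∀ R ∈ C, Q ⊂ R → P ⊆ R) → depth S P < i}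

/-- The chosen equivalence-class representatives of depth `i`. -/
def RepsAt (S : Set (X → X)) (rep : Set X → Set X) (i : ℕ) : Set (Set X) :=
  {R | R ∈ extImgs S ∧ nonSingleton R ∧ rep R = R ∧ depth S R = i}

/-- States of the `i`-th holonomy component `ℋ_i`:
`none` is the extra state `*`, and `some (R, T)` is the tile `T` in the copy of
`tiles(R)` in the disjoint union, for `R` a representative of depth `i`. -/
def ValidAt (S : Set (X → X)) (rep : Set X → Set X) (i : ℕ)
    (t : Option (Set X × Set X)) : Prop :=
  t = none ∨ ∃ R T : Set X, t = some (R, T) ∧ R ∈ RepsAt S rep i ∧ T ∈ tiles S R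

/-- Transformations of the `i`-th holonomy component `ℋ_i` (on its state set):
either a constant map to a state of `ℋ_i`, or an element `(h₁,…,h_k)` of
`H_{R₁} × ⋯ × H_{R_k}` acting on the copy of `tiles(R_j)` by `h_j` (that is, by
`T ↦ T·s` for some `s` stabilizing `R_j`) and fixing `*`. -/
def IsHolTrans (S : Set (X → X)) (rep : Set X → Set X) (i : ℕ)
    (φ : Option (Set X × Set X) → Option (Set X × Set X)) : Prop :=
  (∃ t₀, ValidAt S rep i t₀ ∧ ∀ t, ValidAt S rep i t → φ t = t₀) ∨
  (φ none = none ∧ ∀ R ∈ RepsAt S rep i, ∃ s ∈ S, s '' R = R ∧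
    ∀ T ∈ tiles S R, φ (some (R, T)) = some (R, s '' T))

/-- `F` is an element of the wreath product `ℋ₁ ≀ ⋯ ≀ ℋ_d` of the holonomy
components: the action on each coordinate `i` depends only on the coordinates
above it (through a dependency function), and on every valid state this
component action is a transformation of `ℋ_i`. -/
def IsCascade (S : Set (X → X)) (rep : Set X → Set X) (d : ℕ)
    (F : (Fin d → Option (Set X × Set X)) → (Fin d → Option (Set X × Set X))) : Prop :=
  ∀ i : Fin d, ∃ g : (Fin d → Option (Set X × Set X)) →
      (Option (Set X × Set X) → Option (Set X × Set X)),
    (∀ t, F t i = g t (t i)) ∧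
    (∀ t t', (∀ j : Fin d, j < i → t j = t' j) → g t = g t') ∧
    (∀ t, (∀ j : Fin d, ValidAt S rep (j.val + 1) (t j)) →
      IsHolTrans S rep (i.val + 1) (g t))



/-- mutually reachable subsets admit mutually inverse bijective
mappings between them inside `S¹`. -/
theorem exists_mutually_inverse_mappings {X : Type*} [Fintype X] [Nonempty X]
    (S : Set (X → X)) (hS : ∀ s ∈ S, ∀ t ∈ S, (fun x => t (s x)) ∈ S)
    (P Q : Set X) (s t : X → X)
    (hs : s ∈ insert (id : X → X) S) (ht : t ∈ insert (id : X → X) S)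
    (hPQ : P = s '' Q) (hQP : Q = t '' P) :
    ∃ m ∈ insert (id : X → X) S, ∃ m' ∈ insert (id : X → X) S,
      Set.BijOn m P Q ∧ Set.BijOn m' Q P ∧
      (∀ p ∈ P, m' (m p) = p) ∧ (∀ q ∈ Q, m (m' q) = q) := by
  classical
  set S1 := insert (id : X → X) S with hS1
  have comp_mem : ∀ a ∈ S1, ∀ b ∈ S1, (fun x => b (a x)) ∈ S1 := by
    intro a ha b hb
    rcases ha with ha | ha
    · subst ha; simpa using hb
    · rcases hb with hb | hb
      · subst hb; exact Or.inr ha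
      · exact Or.inr (hS a ha b hb)
  set f : X → X := fun x => s (t x) with hf
  have hfS1 : f ∈ S1 := comp_mem t ht s hs
  have hfP : f '' P = P := by
    rw [hf]
    calc (fun x => s (t x)) '' P = s '' (t '' P) := by rw [Set.image_image]
    _ = s '' Q := by rw [← hQP]
    _ = P := hPQ.symm
  have hmaps : ∀ p ∈ P, f p ∈ P := by
    intro p hp; rw [← hfP]; exact ⟨p, hp, rfl⟩
  have hsurj : ∀ p ∈ P, ∃ q ∈ P, f q = p := by
    intro p hp; rw [← hfP] at hp; exact hp
  -- the restriction of f to P as a self-map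
  let g : P → P := fun p => ⟨f p.1, hmaps p.1 p.2⟩
  have hgsurj : Function.Surjective g := by
    rintro ⟨p, hp⟩
    obtain ⟨q, hq, hfq⟩ := hsurj p hp
    exact ⟨⟨q, hq⟩, Subtype.ext hfq⟩
  have hgbij : Function.Bijective g :=
    ⟨(Finite.injective_iff_surjective).2 hgsurj, hgsurj⟩
  let σ : Equiv.Perm P := Equiv.ofBijective g hgbij
  set n := orderOf σ with hn
  have hnpos : 0 < n := orderOf_pos σ
  have hiter : ∀ (k : ℕ) (p : X) (hp : p ∈ P), f^[k] p = ((σ ^ k) ⟨p, hp⟩ : X) := by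
    intro k
    induction k with
    | zero => intro p hp; simp
    | succ k ih =>
        intro p hp
        rw [Function.iterate_succ_apply]
        rw [ih (f p) (hmaps p hp)]
        have : (σ ^ (k + 1)) ⟨p, hp⟩ = (σ ^ k) (σ ⟨p, hp⟩) := by
          rw [pow_succ]; rfl
        rw [this]
        rfl
  have hfn : ∀ p ∈ P, f^[n] p = p := by
    intro p hp
    rw [hiter n p hp, pow_orderOf_eq_one]
    rfl
  -- iterates of f are in S1
  have hiterS1 : ∀ k : ℕ, f^[k] ∈ S1 := by
    intro k
    induction k with
    | zero => exact Or.inl rfl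
    | succ k ih =>
        have : f^[k + 1] = fun x => f (f^[k] x) := by
          funext x; rw [Function.iterate_succ_apply']
        rw [this]
        exact comp_mem _ ih f hfS1
  have hiterP : ∀ (k : ℕ) (p : X), p ∈ P → f^[k] p ∈ P := by
    intro k
    induction k with
    | zero => intro p hp; simpa using hp
    | succ k ih =>
        intro p hp
        rw [Function.iterate_succ_apply]
        exact ih _ (hmaps p hp)
  set m : X → X := t with hm
  set m' : X → X := fun x => f^[n - 1] (s x) with hm'
  have hm'S1 : m' ∈ S1 := comp_mem s hs _ (hiterS1 (n - 1))
  have hsQ : ∀ q ∈ Q, s q ∈ P := by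
    intro q hq; rw [hPQ]; exact ⟨q, hq, rfl⟩
  have htP : ∀ p ∈ P, t p ∈ Q := by
    intro p hp; rw [hQP]; exact ⟨p, hp, rfl⟩
  have key : ∀ p ∈ P, m' (m p) = p := by
    intro p hp
    show f^[n - 1] (s (t p)) = p
    have : f^[n - 1] (f p) = f^[n] p := by
      rw [← Function.iterate_succ_apply]
      congr 1
      omega
    calc f^[n - 1] (s (t p)) = f^[n - 1] (f p) := rfl
    _ = f^[n] p := this
    _ = p := hfn p hp
  have key' : ∀ q ∈ Q, m (m' q) = q := by
    intro q hq
    obtain ⟨p, hp, hpq⟩ : ∃ p ∈ P, t p = q := by rw [hQP] at hq; exact hq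
    have h1 : m' q = p := by
      have : m' q = m' (m p) := by rw [hm, hpq]
      rw [this, key p hp]
    rw [h1, ← hpq]
  refine ⟨m, ht, m', hm'S1, ?_, ?_, key, key'⟩
  · refine ⟨htP, ?_, ?_⟩
    · intro a ha b hb hab
      have := key a ha
      rw [hab, key b hb] at this
      exact this.symm
    · intro q hq
      rw [hQP] at hq; exact hq
  · refine ⟨?_, ?_, ?_⟩
    · intro q hq
      exact hiterP (n - 1) (s q) (hsQ q hq)
    · intro a ha b hb hab
      have := key' a ha
      rw [hab, key' b hb] at this
      exact this.symm
    · intro p hp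
      exact ⟨t p, htP p hp, key p hp⟩


end Holonomy
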